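/- Key single-letterization inequality from the more capable converse: For jointly distributed discrete random vectors M1,...,M5, Y1^n, Y2^n with finite ranges, defining U_i = (M1, M3, M4, M5, Y1^{i-1}, Y2,i+1^n), we have I(M2; Y1^n | M1, M3, M4, M5) + I(M1, M3, M5; Y2^n | M4) ≤ sum_{i=1}^n [ I(M2; Y1,i | U_i) + I(U_i; Y2,i) ]. -/

import Mathlib

open scoped BigOperators Classical

noncomputable section

/-- Probability that the random variable `X` takes value `x`, under weights `μ`. -/
def pOf {Ω α : Type*} [Fintype Ω] (μ : Ω → ℝ) (X : Ω → α) (x : α) : ℝ :=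
  ∑ ω, if X ω = x then μ ω else 0

/-- Shannon entropy of a discrete random variable `X` with finite range. -/
def Hsh {Ω α : Type*} [Fintype Ω] [Fintype α] (μ : Ω → ℝ) (X : Ω → α) : ℝ :=
  -∑ x, pOf μ X x * Real.log (pOf μ X x)

/-- Conditional entropy `H(X | Y)`. -/
def Hc {Ω α β : Type*} [Fintype Ω] [Fintype α] [Fintype β]
    (μ : Ω → ℝ) (X : Ω → α) (Y : Ω → β) : ℝ :=
  Hsh μ (fun ω => (X ω, Y ω)) - Hsh μ Y

/-- Mutual information `I(X ; Y)`. -/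
def MI {Ω α β : Type*} [Fintype Ω] [Fintype α] [Fintype β]
    (μ : Ω → ℝ) (X : Ω → α) (Y : Ω → β) : ℝ :=
  Hsh μ X + Hsh μ Y - Hsh μ (fun ω => (X ω, Y ω))

/-- Conditional mutual information `I(X ; Y | Z)`. -/
def CMI {Ω α β γ : Type*} [Fintype Ω] [Fintype α] [Fintype β] [Fintype γ]
    (μ : Ω → ℝ) (X : Ω → α) (Y : Ω → β) (Z : Ω → γ) : ℝ :=
  Hsh μ (fun ω => (X ω, Z ω)) + Hsh μ (fun ω => (Y ω, Z ω))
    - Hsh μ (fun ω => (X ω, Y ω, Z ω)) - Hsh μ Z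

/-- `μ` is a probability mass function on the finite sample space `Ω`. -/
def IsProb {Ω : Type*} [Fintype Ω] (μ : Ω → ℝ) : Prop :=
  (∀ ω, 0 ≤ μ ω) ∧ ∑ ω, μ ω = 1

end



set_option linter.unusedSectionVars false
set_option linter.unusedVariables false

section Infra
variable {Ω : Type*} [Fintype Ω] (μ : Ω → ℝ)

lemma pOf_nonneg (h : ∀ ω, 0 ≤ μ ω) {α : Type*} (X : Ω → α) (x : α) :
    0 ≤ pOf μ X x := by
  apply Finset.sum_nonneg; intro ω _; split <;> simp [h ω]

lemma sum_pOf {α : Type*} [Fintype α] (X : Ω → α) :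
    ∑ x, pOf μ X x = ∑ ω, μ ω := by
  unfold pOf
  rw [Finset.sum_comm]
  refine Finset.sum_congr rfl fun ω _ => ?_
  simp

lemma pOf_comp {α δ : Type*} [Fintype α] (W : Ω → α) (g : α → δ) (d : δ) :
    pOf μ (fun ω => g (W ω)) d = ∑ a, if g a = d then pOf μ W a else 0 := by
  unfold pOf
  have h1 : ∀ a : α, (if g a = d then ∑ ω, (if W ω = a then μ ω else 0) else 0)
      = ∑ ω, (if g a = d then (if W ω = a then μ ω else 0) else 0) := by
    intro a; split_ifs <;> simp
  simp only [h1]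
  rw [Finset.sum_comm]
  refine Finset.sum_congr rfl fun ω _ => ?_
  have h2 : ∀ a, (if g a = d then (if W ω = a then μ ω else 0) else 0)
      = (if W ω = a then (if g a = d then μ ω else 0) else 0) := by
    intro a; split_ifs <;> rfl
  simp only [h2, Finset.sum_ite_eq, Finset.mem_univ, if_true]

lemma Hsh_comp_eq {α δ : Type*} [Fintype α] [Fintype δ] (W : Ω → α) (g : α → δ) :
    Hsh μ (fun ω => g (W ω))
      = -∑ a, pOf μ W a * Real.log (pOf μ (fun ω => g (W ω)) (g a)) := by
  unfold Hsh
  congr 1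
  calc ∑ d, pOf μ (fun ω => g (W ω)) d * Real.log (pOf μ (fun ω => g (W ω)) d)
      = ∑ d, ∑ a, (if g a = d then pOf μ W a * Real.log (pOf μ (fun ω => g (W ω)) d) else 0) := by
        refine Finset.sum_congr rfl fun d _ => ?_
        rw [pOf_comp, Finset.sum_mul]
        refine Finset.sum_congr rfl fun a _ => ?_
        split_ifs <;> simp
    _ = ∑ a, ∑ d, (if g a = d then pOf μ W a * Real.log (pOf μ (fun ω => g (W ω)) d) else 0) :=
        Finset.sum_comm
    _ = ∑ a, pOf μ W a * Real.log (pOf μ (fun ω => g (W ω)) (g a)) := by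
        refine Finset.sum_congr rfl fun a _ => ?_
        simp

lemma sum3_comm {α β γ : Type*} [Fintype α] [Fintype β] [Fintype γ] (F : α → β → γ → ℝ) :
    ∑ x, ∑ y, ∑ z, F x y z = ∑ z, ∑ x, ∑ y, F x y z := by
  calc ∑ x, ∑ y, ∑ z, F x y z = ∑ x, ∑ z, ∑ y, F x y z :=
        Finset.sum_congr rfl (fun x _ => Finset.sum_comm)
    _ = ∑ z, ∑ x, ∑ y, F x y z := Finset.sum_comm

lemma CMI_nonneg (hμ : IsProb μ) {α β γ : Type*} [Fintype α] [Fintype β] [Fintype γ]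
    (X : Ω → α) (Y : Ω → β) (Z : Ω → γ) : 0 ≤ CMI μ X Y Z := by
  classical
  set W : Ω → α × β × γ := fun ω => (X ω, Y ω, Z ω) with hW
  set p : α × β × γ → ℝ := pOf μ W with hpdef
  have hp0 : ∀ a, 0 ≤ p a := fun a => pOf_nonneg μ hμ.1 W a
  have hps : ∑ a, p a = 1 := by rw [hpdef, sum_pOf]; exact hμ.2
  set Q1 : α → γ → ℝ := fun x z => ∑ y, p (x, y, z) with hQ1
  set Q2 : β → γ → ℝ := fun y z => ∑ x, p (x, y, z) with hQ2
  set Q3 : γ → ℝ := fun z => ∑ x, ∑ y, p (x, y, z) with hQ3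
  have hQ10 : ∀ x z, 0 ≤ Q1 x z := fun x z => Finset.sum_nonneg fun _ _ => hp0 _
  have hQ20 : ∀ y z, 0 ≤ Q2 y z := fun y z => Finset.sum_nonneg fun _ _ => hp0 _
  have hQ30 : ∀ z, 0 ≤ Q3 z := fun z => Finset.sum_nonneg fun _ _ => hQ10 _ _
  -- pointwise dominations
  have hle1 : ∀ a : α × β × γ, p a ≤ Q1 a.1 a.2.2 := by
    intro a
    have := Finset.single_le_sum (f := fun y => p (a.1, y, a.2.2))
      (fun y _ => hp0 _) (Finset.mem_univ a.2.1)
    simpa using this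
  have hle2 : ∀ a : α × β × γ, p a ≤ Q2 a.2.1 a.2.2 := by
    intro a
    have := Finset.single_le_sum (f := fun x => p (x, a.2.1, a.2.2))
      (fun x _ => hp0 _) (Finset.mem_univ a.1)
    simpa using this
  have hle3 : ∀ a : α × β × γ, p a ≤ Q3 a.2.2 := by
    intro a
    refine le_trans (hle1 a) ?_
    have := Finset.single_le_sum (f := fun x => ∑ y, p (x, y, a.2.2))
      (fun x _ => hQ10 _ _) (Finset.mem_univ a.1)
    simpa using this
  -- entropy identities
  have marg1 : ∀ a : α × β × γ,
      pOf μ (fun ω => ((W ω).1, (W ω).2.2)) ((a.1, a.2.2)) = Q1 a.1 a.2.2 := by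
    intro a
    rw [pOf_comp μ W (fun w => (w.1, w.2.2)) (a.1, a.2.2)]
    simp only [Fintype.sum_prod_type, Prod.mk.injEq, ite_and]
    simp [Finset.sum_ite_eq', Finset.sum_ite_eq, hQ1]
    rfl
  have marg2 : ∀ a : α × β × γ,
      pOf μ (fun ω => ((W ω).2.1, (W ω).2.2)) ((a.2.1, a.2.2)) = Q2 a.2.1 a.2.2 := by
    intro a
    rw [pOf_comp μ W (fun w => (w.2.1, w.2.2)) (a.2.1, a.2.2)]
    simp only [Fintype.sum_prod_type, Prod.mk.injEq, ite_and]
    simp [Finset.sum_ite_eq', Finset.sum_ite_eq, hQ2, Finset.sum_comm]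
    rfl
  have marg3 : ∀ a : α × β × γ,
      pOf μ (fun ω => (W ω).2.2) (a.2.2) = Q3 a.2.2 := by
    intro a
    rw [pOf_comp μ W (fun w => w.2.2) a.2.2]
    simp only [Fintype.sum_prod_type]
    simp [Finset.sum_ite_eq', Finset.sum_ite_eq, hQ3]
    rfl
  have HXZ : Hsh μ (fun ω => (X ω, Z ω)) = -∑ a, p a * Real.log (Q1 a.1 a.2.2) := by
    have : Hsh μ (fun ω => (X ω, Z ω)) = Hsh μ (fun ω => ((W ω).1, (W ω).2.2)) := rfl
    rw [this, Hsh_comp_eq μ W (fun w => (w.1, w.2.2))]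
    congr 1
    exact Finset.sum_congr rfl fun a _ => by rw [marg1 a]
  have HYZ : Hsh μ (fun ω => (Y ω, Z ω)) = -∑ a, p a * Real.log (Q2 a.2.1 a.2.2) := by
    have : Hsh μ (fun ω => (Y ω, Z ω)) = Hsh μ (fun ω => ((W ω).2.1, (W ω).2.2)) := rfl
    rw [this, Hsh_comp_eq μ W (fun w => (w.2.1, w.2.2))]
    congr 1
    exact Finset.sum_congr rfl fun a _ => by rw [marg2 a]
  have HZ : Hsh μ Z = -∑ a, p a * Real.log (Q3 a.2.2) := by
    have : Hsh μ Z = Hsh μ (fun ω => (W ω).2.2) := rfl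
    rw [this, Hsh_comp_eq μ W (fun w => w.2.2)]
    congr 1
    exact Finset.sum_congr rfl fun a _ => by rw [marg3 a]
  have HXYZ : Hsh μ (fun ω => (X ω, Y ω, Z ω)) = -∑ a, p a * Real.log (p a) := rfl
  rw [CMI, HXZ, HYZ, HZ, HXYZ]
  -- now pure sums
  have key : ∑ a, p a * Real.log (Q1 a.1 a.2.2) + ∑ a, p a * Real.log (Q2 a.2.1 a.2.2)
      - ∑ a, p a * Real.log (p a) - ∑ a, p a * Real.log (Q3 a.2.2) ≤ 0 := by
    have hsum : ∑ a, p a * Real.log (Q1 a.1 a.2.2) + ∑ a, p a * Real.log (Q2 a.2.1 a.2.2)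
        - ∑ a, p a * Real.log (p a) - ∑ a, p a * Real.log (Q3 a.2.2)
        = ∑ a : α × β × γ, (p a * Real.log (Q1 a.1 a.2.2) + p a * Real.log (Q2 a.2.1 a.2.2)
            - p a * Real.log (p a) - p a * Real.log (Q3 a.2.2)) := by
      rw [Finset.sum_sub_distrib, Finset.sum_sub_distrib, Finset.sum_add_distrib]
    rw [hsum]
    have hbound : ∀ a : α × β × γ,
        p a * Real.log (Q1 a.1 a.2.2) + p a * Real.log (Q2 a.2.1 a.2.2)
          - p a * Real.log (p a) - p a * Real.log (Q3 a.2.2)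
        ≤ (if p a = 0 then 0 else Q1 a.1 a.2.2 * Q2 a.2.1 a.2.2 / Q3 a.2.2) - p a := by
      intro a
      by_cases hpa : p a = 0
      · simp [hpa]
      · have hppos : 0 < p a := lt_of_le_of_ne (hp0 a) (Ne.symm hpa)
        have h1 : 0 < Q1 a.1 a.2.2 := lt_of_lt_of_le hppos (hle1 a)
        have h2 : 0 < Q2 a.2.1 a.2.2 := lt_of_lt_of_le hppos (hle2 a)
        have h3 : 0 < Q3 a.2.2 := lt_of_lt_of_le hppos (hle3 a)
        rw [if_neg hpa]
        have hlog : Real.log (Q1 a.1 a.2.2) + Real.log (Q2 a.2.1 a.2.2)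
            - Real.log (p a) - Real.log (Q3 a.2.2)
            = Real.log (Q1 a.1 a.2.2 * Q2 a.2.1 a.2.2 / (p a * Q3 a.2.2)) := by
          rw [Real.log_div (by positivity) (by positivity),
              Real.log_mul (ne_of_gt h1) (ne_of_gt h2),
              Real.log_mul (ne_of_gt hppos) (ne_of_gt h3)]
          ring
        have hratio : 0 < Q1 a.1 a.2.2 * Q2 a.2.1 a.2.2 / (p a * Q3 a.2.2) := by positivity
        have := Real.log_le_sub_one_of_pos hratio
        have hmul := mul_le_mul_of_nonneg_left this (le_of_lt hppos)
        have hlhs : p a * Real.log (Q1 a.1 a.2.2) + p a * Real.log (Q2 a.2.1 a.2.2)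
            - p a * Real.log (p a) - p a * Real.log (Q3 a.2.2)
            = p a * Real.log (Q1 a.1 a.2.2 * Q2 a.2.1 a.2.2 / (p a * Q3 a.2.2)) := by
          rw [← hlog]; ring
        rw [hlhs]
        refine le_trans hmul (le_of_eq ?_)
        field_simp
    refine le_trans (Finset.sum_le_sum (fun a _ => hbound a)) ?_
    rw [Finset.sum_sub_distrib, hps]
    have hS : ∑ a : α × β × γ, (if p a = 0 then 0 else Q1 a.1 a.2.2 * Q2 a.2.1 a.2.2 / Q3 a.2.2)
        ≤ ∑ a : α × β × γ, (if Q3 a.2.2 = 0 then 0 else Q1 a.1 a.2.2 * Q2 a.2.1 a.2.2 / Q3 a.2.2) := by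
      refine Finset.sum_le_sum fun a _ => ?_
      by_cases hpa : p a = 0
      · rw [if_pos hpa]
        split_ifs with h
        · exact le_refl 0
        · exact div_nonneg (mul_nonneg (hQ10 _ _) (hQ20 _ _)) (hQ30 _)
      · have h3 : Q3 a.2.2 ≠ 0 := ne_of_gt (lt_of_lt_of_le (lt_of_le_of_ne (hp0 a) (Ne.symm hpa)) (hle3 a))
        rw [if_neg hpa, if_neg h3]
    have hS2 : ∑ a : α × β × γ, (if Q3 a.2.2 = 0 then 0 else Q1 a.1 a.2.2 * Q2 a.2.1 a.2.2 / Q3 a.2.2)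
        = ∑ z, (if Q3 z = 0 then 0 else Q3 z) := by
      rw [Fintype.sum_prod_type]
      simp only [Fintype.sum_prod_type]
      rw [sum3_comm]
      refine Finset.sum_congr rfl fun z _ => ?_
      by_cases h : Q3 z = 0
      · simp [h]
      · rw [if_neg h]
        have : ∀ x, ∑ y, (if Q3 z = 0 then (0:ℝ) else Q1 x z * Q2 y z / Q3 z)
            = ∑ y, Q1 x z * Q2 y z / Q3 z := by
          intro x; exact Finset.sum_congr rfl fun y _ => by rw [if_neg h]
        simp only [this]
        have hfac : ∑ x, ∑ y, Q1 x z * Q2 y z / Q3 z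
            = (∑ x, Q1 x z) * (∑ y, Q2 y z) / Q3 z := by
          rw [Finset.sum_mul_sum]
          rw [Finset.sum_div]
          refine Finset.sum_congr rfl fun x _ => ?_
          rw [Finset.sum_div]
        rw [hfac]
        have e1 : ∑ x, Q1 x z = Q3 z := rfl
        have e2 : ∑ y, Q2 y z = Q3 z := by
          rw [hQ3]; exact Finset.sum_comm
        rw [e1, e2, mul_div_assoc, div_self h, mul_one]
    have hS3 : ∑ z, (if Q3 z = 0 then (0:ℝ) else Q3 z) ≤ ∑ z, Q3 z := by
      refine Finset.sum_le_sum fun z _ => ?_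
      split_ifs with h
      · exact hQ30 z
      · exact le_refl _
    have hS4 : ∑ z, Q3 z = 1 := by
      calc ∑ z, Q3 z = ∑ z, ∑ x, ∑ y, p (x, y, z) := rfl
        _ = ∑ x, ∑ y, ∑ z, p (x, y, z) := (sum3_comm _).symm
        _ = 1 := by rw [← hps]; simp only [Fintype.sum_prod_type]
    linarith
  linarith

lemma Hsh_congr {α α' : Type*} [Fintype α] [Fintype α'] {X : Ω → α} {X' : Ω → α'}
    (f : α → α') (hf : Function.Injective f) (h : ∀ ω, f (X ω) = X' ω) :
    Hsh μ X = Hsh μ X' := by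
  have hX' : X' = fun ω => f (X ω) := by funext ω; rw [h]
  subst hX'
  unfold Hsh
  congr 1
  have hp : ∀ a, pOf μ (fun ω => f (X ω)) (f a) = pOf μ X a := by
    intro a
    unfold pOf
    refine Finset.sum_congr rfl fun ω _ => ?_
    simp [hf.eq_iff]
  have hz : ∀ b, b ∉ Finset.univ.image f → pOf μ (fun ω => f (X ω)) b = 0 := by
    intro b hb
    unfold pOf
    apply Finset.sum_eq_zero
    intro ω _
    rw [if_neg]
    intro hc
    exact hb (Finset.mem_image.2 ⟨X ω, Finset.mem_univ _, hc⟩)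
  rw [← Finset.sum_subset (Finset.subset_univ (Finset.univ.image f))
      (fun b _ hb => by rw [hz b hb]; simp)]
  rw [Finset.sum_image (fun a _ b _ hab => hf hab)]
  exact Finset.sum_congr rfl fun a _ => by rw [hp]

lemma MI_nonneg (hμ : IsProb μ) {α β : Type*} [Fintype α] [Fintype β]
    (X : Ω → α) (Y : Ω → β) : 0 ≤ MI μ X Y := by
  have h := CMI_nonneg μ hμ X Y (fun _ => (() : Unit))
  have e1 : Hsh μ (fun ω => (X ω, ())) = Hsh μ X :=
    Hsh_congr μ Prod.fst
      (by rintro ⟨a, ⟨⟩⟩ ⟨b, ⟨⟩⟩ hab; simpa using hab) (fun ω => rfl)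
  have e2 : Hsh μ (fun ω => (Y ω, ())) = Hsh μ Y :=
    Hsh_congr μ Prod.fst
      (by rintro ⟨a, ⟨⟩⟩ ⟨b, ⟨⟩⟩ hab; simpa using hab) (fun ω => rfl)
  have e3 : Hsh μ (fun ω => (X ω, Y ω, ())) = Hsh μ (fun ω => (X ω, Y ω)) :=
    Hsh_congr μ (fun p => (p.1, p.2.1))
      (by rintro ⟨a, b, ⟨⟩⟩ ⟨a', b', ⟨⟩⟩ hab
          simp only [Prod.mk.injEq] at hab ⊢; tauto) (fun ω => rfl)
  have e4 : Hsh μ (fun _ : Ω => ()) = 0 := by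
    simp [Hsh, pOf, hμ.2]
  unfold CMI at h
  rw [e1, e2, e3, e4] at h
  unfold MI
  linarith

lemma CMI_congr {α α' β β' γ γ' : Type*} [Fintype α] [Fintype α'] [Fintype β] [Fintype β']
    [Fintype γ] [Fintype γ'] {X : Ω → α} {X' : Ω → α'} {Y : Ω → β} {Y' : Ω → β'}
    {Z : Ω → γ} {Z' : Ω → γ'}
    (fX : α → α') (hfX : Function.Injective fX) (hX : ∀ ω, fX (X ω) = X' ω)
    (fY : β → β') (hfY : Function.Injective fY) (hY : ∀ ω, fY (Y ω) = Y' ω)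
    (fZ : γ → γ') (hfZ : Function.Injective fZ) (hZ : ∀ ω, fZ (Z ω) = Z' ω) :
    CMI μ X Y Z = CMI μ X' Y' Z' := by
  unfold CMI
  rw [show Hsh μ (fun ω => (X ω, Z ω)) = Hsh μ (fun ω => (X' ω, Z' ω)) from
        Hsh_congr μ (Prod.map fX fZ) (hfX.prodMap hfZ)
          (fun ω => by simp [Prod.map, hX, hZ]),
      show Hsh μ (fun ω => (Y ω, Z ω)) = Hsh μ (fun ω => (Y' ω, Z' ω)) from
        Hsh_congr μ (Prod.map fY fZ) (hfY.prodMap hfZ)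
          (fun ω => by simp [Prod.map, hY, hZ]),
      show Hsh μ (fun ω => (X ω, Y ω, Z ω)) = Hsh μ (fun ω => (X' ω, Y' ω, Z' ω)) from
        Hsh_congr μ (Prod.map fX (Prod.map fY fZ)) (hfX.prodMap (hfY.prodMap hfZ))
          (fun ω => by simp [Prod.map, hX, hY, hZ]),
      show Hsh μ Z = Hsh μ Z' from Hsh_congr μ fZ hfZ hZ]

lemma MI_congr {α α' β β' : Type*} [Fintype α] [Fintype α'] [Fintype β] [Fintype β']
    {X : Ω → α} {X' : Ω → α'} {Y : Ω → β} {Y' : Ω → β'}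
    (fX : α → α') (hfX : Function.Injective fX) (hX : ∀ ω, fX (X ω) = X' ω)
    (fY : β → β') (hfY : Function.Injective fY) (hY : ∀ ω, fY (Y ω) = Y' ω) :
    MI μ X Y = MI μ X' Y' := by
  unfold MI
  rw [show Hsh μ X = Hsh μ X' from Hsh_congr μ fX hfX hX,
      show Hsh μ Y = Hsh μ Y' from Hsh_congr μ fY hfY hY,
      show Hsh μ (fun ω => (X ω, Y ω)) = Hsh μ (fun ω => (X' ω, Y' ω)) from
        Hsh_congr μ (Prod.map fX fY) (hfX.prodMap hfY)
          (fun ω => by simp [Prod.map, hX, hY])]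

lemma CMI_chain {α β γ δ : Type*} [Fintype α] [Fintype β] [Fintype γ] [Fintype δ]
    (X : Ω → α) (W : Ω → δ) (Y : Ω → β) (Z : Ω → γ) :
    CMI μ (fun ω => (X ω, W ω)) Y Z
      = CMI μ W Y Z + CMI μ X Y (fun ω => (W ω, Z ω)) := by
  unfold CMI
  have e1 : Hsh μ (fun ω => ((X ω, W ω), Z ω)) = Hsh μ (fun ω => (X ω, (W ω, Z ω))) :=
    Hsh_congr μ (fun p => (p.1.1, (p.1.2, p.2)))
      (by rintro ⟨⟨a, b⟩, c⟩ ⟨⟨a', b'⟩, c'⟩ hab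
          simp only [Prod.mk.injEq] at hab ⊢; tauto) (fun ω => rfl)
  have e2 : Hsh μ (fun ω => (Y ω, (W ω, Z ω))) = Hsh μ (fun ω => (W ω, (Y ω, Z ω))) :=
    Hsh_congr μ (fun p => (p.2.1, (p.1, p.2.2)))
      (by rintro ⟨a, b, c⟩ ⟨a', b', c'⟩ hab
          simp only [Prod.mk.injEq] at hab ⊢; tauto) (fun ω => rfl)
  have e3 : Hsh μ (fun ω => ((X ω, W ω), (Y ω, Z ω)))
      = Hsh μ (fun ω => (X ω, (Y ω, (W ω, Z ω)))) :=
    Hsh_congr μ (fun p => (p.1.1, (p.2.1, (p.1.2, p.2.2))))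
      (by rintro ⟨⟨a, b⟩, c, d⟩ ⟨⟨a', b'⟩, c', d'⟩ hab
          simp only [Prod.mk.injEq] at hab ⊢; tauto) (fun ω => rfl)
  rw [e1, e2, e3]
  ring

lemma MI_chain {α β γ : Type*} [Fintype α] [Fintype β] [Fintype γ]
    (X : Ω → α) (Z : Ω → γ) (Y : Ω → β) :
    MI μ (fun ω => (X ω, Z ω)) Y = MI μ Z Y + CMI μ X Y Z := by
  unfold MI CMI
  have e1 : Hsh μ (fun ω => (Y ω, Z ω)) = Hsh μ (fun ω => (Z ω, Y ω)) :=
    Hsh_congr μ (fun p => (p.2, p.1))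
      (by rintro ⟨a, b⟩ ⟨a', b'⟩ hab
          simp only [Prod.mk.injEq] at hab ⊢; tauto) (fun ω => rfl)
  have e2 : Hsh μ (fun ω => ((X ω, Z ω), Y ω)) = Hsh μ (fun ω => (X ω, (Y ω, Z ω))) :=
    Hsh_congr μ (fun p => (p.1.1, (p.2, p.1.2)))
      (by rintro ⟨⟨a, b⟩, c⟩ ⟨⟨a', b'⟩, c'⟩ hab
          simp only [Prod.mk.injEq] at hab ⊢; tauto) (fun ω => rfl)
  rw [e1, e2]
  ring

lemma CMI_mono (hμ : IsProb μ) {α β γ δ : Type*} [Fintype α] [Fintype β] [Fintype γ] [Fintype δ]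
    (X : Ω → α) (W : Ω → δ) (Y : Ω → β) (Z : Ω → γ) :
    CMI μ W Y Z ≤ CMI μ (fun ω => (X ω, W ω)) Y Z := by
  rw [CMI_chain]
  have := CMI_nonneg μ hμ X Y (fun ω => (W ω, Z ω))
  linarith

lemma CMI_le_MI (hμ : IsProb μ) {α β γ : Type*} [Fintype α] [Fintype β] [Fintype γ]
    (X : Ω → α) (Y : Ω → β) (Z : Ω → γ) :
    CMI μ X Y Z ≤ MI μ (fun ω => (X ω, Z ω)) Y := by
  rw [MI_chain]
  have := MI_nonneg μ hμ Z Y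
  linarith

end Infra

section Helpers

variable {Ω : Type*} [Fintype Ω]

def preY {β : Type*} (n : ℕ) (Y : Ω → Fin n → β) (k : ℕ) (ω : Ω) :
    Fin (n - (n - k)) → β :=
  fun j => Y ω ⟨j.val, by have := j.isLt; omega⟩

def sufY {β : Type*} (n : ℕ) (Y : Ω → Fin n → β) (k : ℕ) (ω : Ω) :
    Fin (n - k) → β :=
  fun j => Y ω ⟨k + j.val, by have := j.isLt; omega⟩

def snocP (n k : ℕ) {β : Type*} (p : (Fin (n - (n - k)) → β) × β) :
    Fin (n - (n - (k + 1))) → β :=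
  fun j => if h : j.val < n - (n - k) then p.1 ⟨j.val, h⟩ else p.2

lemma snocP_inj {n k : ℕ} (hk : k < n) {β : Type*} :
    Function.Injective (snocP n k (β := β)) := by
  rintro ⟨a, y⟩ ⟨a', y'⟩ h
  have h1 : a = a' := by
    funext j
    have hj := congrFun h ⟨j.val, by have := j.isLt; omega⟩
    simpa [snocP, j.isLt] using hj
  have h2 : y = y' := by
    have hj := congrFun h ⟨k, by omega⟩
    have hnk : ¬ (k < n - (n - k)) := by omega
    simpa [snocP, hnk] using hj
  simp [h1, h2]

lemma snocP_spec {n k : ℕ} (hk : k < n) {β : Type*} (Y : Ω → Fin n → β) (ω : Ω) :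
    snocP n k (preY n Y k ω, Y ω ⟨k, hk⟩) = preY n Y (k + 1) ω := by
  funext j
  have hj := j.isLt
  unfold snocP preY
  split_ifs with h
  · rfl
  · exact congrArg (Y ω) (Fin.ext (by simp only []; omega))

def consS (n k : ℕ) {β : Type*} (p : β × (Fin (n - (k + 1)) → β)) :
    Fin (n - k) → β :=
  fun j => if h : j.val = 0 then p.1
    else p.2 ⟨j.val - 1, by have := j.isLt; omega⟩

lemma consS_inj {n k : ℕ} (hk : k < n) {β : Type*} :
    Function.Injective (consS n k (β := β)) := by
  rintro ⟨y, b⟩ ⟨y', b'⟩ h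
  have h1 : y = y' := by
    have hj := congrFun h ⟨0, by omega⟩
    simpa [consS] using hj
  have h2 : b = b' := by
    funext j
    have hj := congrFun h ⟨j.val + 1, by have := j.isLt; omega⟩
    simpa [consS] using hj
  simp [h1, h2]

lemma consS_spec {n k : ℕ} (hk : k < n) {β : Type*} (Y : Ω → Fin n → β) (ω : Ω) :
    consS n k (Y ω ⟨k, hk⟩, sufY n Y (k + 1) ω) = sufY n Y k ω := by
  funext j
  have hj := j.isLt
  unfold consS sufY
  split_ifs with h
  · exact congrArg (Y ω) (Fin.ext (by simp only []; omega))
  · exact congrArg (Y ω) (Fin.ext (by simp only []; omega))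

end Helpers

section Generics

variable {Ω : Type*} [Fintype Ω] (μ : Ω → ℝ)

lemma expandA {ν χ β : Type*} [Fintype ν] [Fintype χ] [Fintype β] {n : ℕ}
    (X : Ω → χ) (W : Ω → ν) (Y : Ω → Fin n → β) :
    CMI μ X Y W = ∑ k ∈ Finset.range n,
      (if h : k < n then
        CMI μ X (fun ω => Y ω ⟨k, h⟩) (fun ω => (W ω, preY n Y k ω)) else 0) := by
  classical
  set f1 : ℕ → ℝ := fun k => Hsh μ (fun ω => (W ω, preY n Y k ω)) with hf1
  set f2 : ℕ → ℝ := fun k => Hsh μ (fun ω => (X ω, (W ω, preY n Y k ω))) with hf2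
  have hstep : ∀ k ∈ Finset.range n,
      (if h : k < n then
        CMI μ X (fun ω => Y ω ⟨k, h⟩) (fun ω => (W ω, preY n Y k ω)) else 0)
      = (f2 k - f2 (k + 1)) + (f1 (k + 1) - f1 k) := by
    intro k hkmem
    have hk : k < n := Finset.mem_range.1 hkmem
    rw [dif_pos hk]
    simp only [CMI, hf1, hf2]
    rw [show Hsh μ (fun ω => (Y ω ⟨k, hk⟩, (W ω, preY n Y k ω)))
          = Hsh μ (fun ω => (W ω, preY n Y (k + 1) ω)) from
        Hsh_congr μ (fun p => (p.2.1, snocP n k (p.2.2, p.1)))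
          (by rintro ⟨y, v, a⟩ ⟨y', v', a'⟩ hp
              simp only [Prod.mk.injEq] at hp ⊢
              have := snocP_inj hk (show snocP n k (a, y) = snocP n k (a', y') from hp.2)
              simp only [Prod.mk.injEq] at this
              tauto)
          (fun ω => by simp only []; rw [snocP_spec hk]),
        show Hsh μ (fun ω => (X ω, (Y ω ⟨k, hk⟩, (W ω, preY n Y k ω))))
          = Hsh μ (fun ω => (X ω, (W ω, preY n Y (k + 1) ω))) from
        Hsh_congr μ (fun p => (p.1, (p.2.2.1, snocP n k (p.2.2.2, p.2.1))))
          (by rintro ⟨x, y, v, a⟩ ⟨x', y', v', a'⟩ hp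
              simp only [Prod.mk.injEq] at hp ⊢
              have := snocP_inj hk
                (show snocP n k (a, y) = snocP n k (a', y') from hp.2.2)
              simp only [Prod.mk.injEq] at this
              tauto)
          (fun ω => by simp only []; rw [snocP_spec hk])]
    ring
  rw [Finset.sum_congr rfl hstep, Finset.sum_add_distrib, Finset.sum_range_sub' f2,
      Finset.sum_range_sub f1]
  simp only [CMI, hf1, hf2]
  rw [show Hsh μ (fun ω => (X ω, W ω))
        = Hsh μ (fun ω => (X ω, (W ω, preY n Y 0 ω))) from
      Hsh_congr μ (fun p => (p.1, (p.2, fun j => absurd j.isLt (by omega))))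
        (by rintro ⟨x, w⟩ ⟨x', w'⟩ hp
            simp only [Prod.mk.injEq] at hp ⊢
            tauto)
        (fun ω => by
          simp only [Prod.mk.injEq, true_and]
          exact funext fun j => absurd j.isLt (by omega)),
      show Hsh μ (fun ω => (Y ω, W ω))
        = Hsh μ (fun ω => (W ω, preY n Y n ω)) from
      Hsh_congr μ (fun p => (p.2, fun j => p.1 ⟨j.val, by have := j.isLt; omega⟩))
        (by rintro ⟨y, w⟩ ⟨y', w'⟩ hp
            simp only [Prod.mk.injEq] at hp ⊢
            refine ⟨funext fun j => ?_, hp.1⟩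
            simpa using congrFun hp.2 ⟨j.val, by have := j.isLt; omega⟩)
        (fun ω => by
          simp only [Prod.mk.injEq, true_and]
          exact funext fun j => rfl),
      show Hsh μ (fun ω => (X ω, Y ω, W ω))
        = Hsh μ (fun ω => (X ω, (W ω, preY n Y n ω))) from
      Hsh_congr μ (fun p => (p.1, (p.2.2, fun j => p.2.1 ⟨j.val, by have := j.isLt; omega⟩)))
        (by rintro ⟨x, y, w⟩ ⟨x', y', w'⟩ hp
            simp only [Prod.mk.injEq] at hp ⊢
            refine ⟨hp.1, funext fun j => ?_, hp.2.1⟩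
            simpa using congrFun hp.2.2 ⟨j.val, by have := j.isLt; omega⟩)
        (fun ω => by
          simp only [Prod.mk.injEq, true_and]
          exact funext fun j => rfl),
      show Hsh μ W = Hsh μ (fun ω => (W ω, preY n Y 0 ω)) from
      Hsh_congr μ (fun w => (w, fun j => absurd j.isLt (by omega)))
        (by intro w w' hp
            simp only [Prod.mk.injEq] at hp
            exact hp.1)
        (fun ω => by
          simp only [Prod.mk.injEq, true_and]
          exact funext fun j => absurd j.isLt (by omega))]
  ring

end Generics

section Generics2

variable {Ω : Type*} [Fintype Ω] (μ : Ω → ℝ)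

lemma expandB {ν χ β : Type*} [Fintype ν] [Fintype χ] [Fintype β] {n : ℕ}
    (X : Ω → χ) (W : Ω → ν) (Y : Ω → Fin n → β) :
    CMI μ X Y W = ∑ k ∈ Finset.range n,
      (if h : k < n then
        CMI μ X (fun ω => Y ω ⟨k, h⟩) (fun ω => (W ω, sufY n Y (k + 1) ω)) else 0) := by
  classical
  set f1 : ℕ → ℝ := fun k => Hsh μ (fun ω => (W ω, sufY n Y k ω)) with hf1
  set f2 : ℕ → ℝ := fun k => Hsh μ (fun ω => (X ω, (W ω, sufY n Y k ω))) with hf2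
  have hstep : ∀ k ∈ Finset.range n,
      (if h : k < n then
        CMI μ X (fun ω => Y ω ⟨k, h⟩) (fun ω => (W ω, sufY n Y (k + 1) ω)) else 0)
      = (f2 (k + 1) - f2 k) + (f1 k - f1 (k + 1)) := by
    intro k hkmem
    have hk : k < n := Finset.mem_range.1 hkmem
    rw [dif_pos hk]
    simp only [CMI, hf1, hf2]
    rw [show Hsh μ (fun ω => (Y ω ⟨k, hk⟩, (W ω, sufY n Y (k + 1) ω)))
          = Hsh μ (fun ω => (W ω, sufY n Y k ω)) from
        Hsh_congr μ (fun p => (p.2.1, consS n k (p.1, p.2.2)))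
          (by rintro ⟨y, v, b⟩ ⟨y', v', b'⟩ hp
              simp only [Prod.mk.injEq] at hp ⊢
              have := consS_inj hk (show consS n k (y, b) = consS n k (y', b') from hp.2)
              simp only [Prod.mk.injEq] at this
              tauto)
          (fun ω => by simp only []; rw [consS_spec hk]),
        show Hsh μ (fun ω => (X ω, (Y ω ⟨k, hk⟩, (W ω, sufY n Y (k + 1) ω))))
          = Hsh μ (fun ω => (X ω, (W ω, sufY n Y k ω))) from
        Hsh_congr μ (fun p => (p.1, (p.2.2.1, consS n k (p.2.1, p.2.2.2))))
          (by rintro ⟨x, y, v, b⟩ ⟨x', y', v', b'⟩ hp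
              simp only [Prod.mk.injEq] at hp ⊢
              have := consS_inj hk (show consS n k (y, b) = consS n k (y', b') from hp.2.2)
              simp only [Prod.mk.injEq] at this
              tauto)
          (fun ω => by simp only []; rw [consS_spec hk])]
    ring
  rw [Finset.sum_congr rfl hstep, Finset.sum_add_distrib, Finset.sum_range_sub f2,
      Finset.sum_range_sub' f1]
  simp only [CMI, hf1, hf2]
  rw [show Hsh μ (fun ω => (X ω, W ω))
        = Hsh μ (fun ω => (X ω, (W ω, sufY n Y n ω))) from
      Hsh_congr μ (fun p => (p.1, (p.2, fun j => absurd j.isLt (by omega))))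
        (by rintro ⟨x, w⟩ ⟨x', w'⟩ hp
            simp only [Prod.mk.injEq] at hp ⊢
            tauto)
        (fun ω => by
          simp only [Prod.mk.injEq, true_and]
          exact funext fun j => absurd j.isLt (by omega)),
      show Hsh μ (fun ω => (Y ω, W ω))
        = Hsh μ (fun ω => (W ω, sufY n Y 0 ω)) from
      Hsh_congr μ (fun p => (p.2, fun j => p.1 ⟨0 + j.val, by have := j.isLt; omega⟩))
        (by rintro ⟨y, w⟩ ⟨y', w'⟩ hp
            simp only [Prod.mk.injEq] at hp ⊢
            refine ⟨funext fun j => ?_, hp.1⟩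
            simpa using congrFun hp.2 ⟨j.val, by have := j.isLt; omega⟩)
        (fun ω => by
          simp only [Prod.mk.injEq, true_and]
          exact funext fun j => rfl),
      show Hsh μ (fun ω => (X ω, Y ω, W ω))
        = Hsh μ (fun ω => (X ω, (W ω, sufY n Y 0 ω))) from
      Hsh_congr μ (fun p => (p.1, (p.2.2, fun j => p.2.1 ⟨0 + j.val, by have := j.isLt; omega⟩)))
        (by rintro ⟨x, y, w⟩ ⟨x', y', w'⟩ hp
            simp only [Prod.mk.injEq] at hp ⊢
            refine ⟨hp.1, funext fun j => ?_, hp.2.1⟩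
            simpa using congrFun hp.2.2 ⟨j.val, by have := j.isLt; omega⟩)
        (fun ω => by
          simp only [Prod.mk.injEq, true_and]
          exact funext fun j => rfl),
      show Hsh μ W = Hsh μ (fun ω => (W ω, sufY n Y n ω)) from
      Hsh_congr μ (fun w => (w, fun j => absurd j.isLt (by omega)))
        (by intro w w' hp
            simp only [Prod.mk.injEq] at hp
            exact hp.1)
        (fun ω => by
          simp only [Prod.mk.injEq, true_and]
          exact funext fun j => absurd j.isLt (by omega))]
  ring

lemma csiszar {ν β₁ β₂ : Type*} [Fintype ν] [Fintype β₁] [Fintype β₂] {n : ℕ}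
    (W : Ω → ν) (Y1 : Ω → Fin n → β₁) (Y2 : Ω → Fin n → β₂) :
    ∑ k ∈ Finset.range n,
      (if h : k < n then
        CMI μ (fun ω => sufY n Y2 (k + 1) ω) (fun ω => Y1 ω ⟨k, h⟩)
          (fun ω => (W ω, preY n Y1 k ω)) else 0)
    = ∑ k ∈ Finset.range n,
      (if h : k < n then
        CMI μ (fun ω => preY n Y1 k ω) (fun ω => Y2 ω ⟨k, h⟩)
          (fun ω => (W ω, sufY n Y2 (k + 1) ω)) else 0) := by
  classical
  set f1 : ℕ → ℝ := fun k => Hsh μ (fun ω => (W ω, preY n Y1 k ω)) with hf1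
  set f3 : ℕ → ℝ := fun k => Hsh μ (fun ω => (W ω, sufY n Y2 k ω)) with hf3
  set g : ℕ → ℝ := fun k => Hsh μ (fun ω => (sufY n Y2 k ω, (W ω, preY n Y1 k ω))) with hg
  rw [← sub_eq_zero, ← Finset.sum_sub_distrib]
  have hterm : ∀ k ∈ Finset.range n,
      ((if h : k < n then
        CMI μ (fun ω => sufY n Y2 (k + 1) ω) (fun ω => Y1 ω ⟨k, h⟩)
          (fun ω => (W ω, preY n Y1 k ω)) else 0)
      - (if h : k < n then
        CMI μ (fun ω => preY n Y1 k ω) (fun ω => Y2 ω ⟨k, h⟩)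
          (fun ω => (W ω, sufY n Y2 (k + 1) ω)) else 0))
      = ((f1 (k + 1) - f1 k) + (f3 (k + 1) - f3 k)) - (g (k + 1) - g k) := by
    intro k hkmem
    have hk : k < n := Finset.mem_range.1 hkmem
    rw [dif_pos hk, dif_pos hk]
    simp only [CMI, hf1, hf3, hg]
    rw [show Hsh μ (fun ω => (Y1 ω ⟨k, hk⟩, (W ω, preY n Y1 k ω)))
          = Hsh μ (fun ω => (W ω, preY n Y1 (k + 1) ω)) from
        Hsh_congr μ (fun p => (p.2.1, snocP n k (p.2.2, p.1)))
          (by rintro ⟨y, v, a⟩ ⟨y', v', a'⟩ hp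
              simp only [Prod.mk.injEq] at hp ⊢
              have := snocP_inj hk (show snocP n k (a, y) = snocP n k (a', y') from hp.2)
              simp only [Prod.mk.injEq] at this
              tauto)
          (fun ω => by simp only []; rw [snocP_spec hk]),
        show Hsh μ (fun ω => (sufY n Y2 (k + 1) ω, (Y1 ω ⟨k, hk⟩, (W ω, preY n Y1 k ω))))
          = Hsh μ (fun ω => (sufY n Y2 (k + 1) ω, (W ω, preY n Y1 (k + 1) ω))) from
        Hsh_congr μ (fun p => (p.1, (p.2.2.1, snocP n k (p.2.2.2, p.2.1))))
          (by rintro ⟨b, y, v, a⟩ ⟨b', y', v', a'⟩ hp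
              simp only [Prod.mk.injEq] at hp ⊢
              have := snocP_inj hk (show snocP n k (a, y) = snocP n k (a', y') from hp.2.2)
              simp only [Prod.mk.injEq] at this
              tauto)
          (fun ω => by simp only []; rw [snocP_spec hk]),
        show Hsh μ (fun ω => (preY n Y1 k ω, (W ω, sufY n Y2 (k + 1) ω)))
          = Hsh μ (fun ω => (sufY n Y2 (k + 1) ω, (W ω, preY n Y1 k ω))) from
        Hsh_congr μ (fun p => (p.2.2, (p.2.1, p.1)))
          (by rintro ⟨a, v, b⟩ ⟨a', v', b'⟩ hp
              simp only [Prod.mk.injEq] at hp ⊢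
              tauto)
          (fun ω => rfl),
        show Hsh μ (fun ω => (Y2 ω ⟨k, hk⟩, (W ω, sufY n Y2 (k + 1) ω)))
          = Hsh μ (fun ω => (W ω, sufY n Y2 k ω)) from
        Hsh_congr μ (fun p => (p.2.1, consS n k (p.1, p.2.2)))
          (by rintro ⟨y, v, b⟩ ⟨y', v', b'⟩ hp
              simp only [Prod.mk.injEq] at hp ⊢
              have := consS_inj hk (show consS n k (y, b) = consS n k (y', b') from hp.2)
              simp only [Prod.mk.injEq] at this
              tauto)
          (fun ω => by simp only []; rw [consS_spec hk]),
        show Hsh μ (fun ω => (preY n Y1 k ω, (Y2 ω ⟨k, hk⟩, (W ω, sufY n Y2 (k + 1) ω))))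
          = Hsh μ (fun ω => (sufY n Y2 k ω, (W ω, preY n Y1 k ω))) from
        Hsh_congr μ (fun p => (consS n k (p.2.1, p.2.2.2), (p.2.2.1, p.1)))
          (by rintro ⟨a, y, v, b⟩ ⟨a', y', v', b'⟩ hp
              simp only [Prod.mk.injEq] at hp ⊢
              have := consS_inj hk (show consS n k (y, b) = consS n k (y', b') from hp.1)
              simp only [Prod.mk.injEq] at this
              tauto)
          (fun ω => by simp only []; rw [consS_spec hk])]
    ring
  rw [Finset.sum_congr rfl hterm, Finset.sum_sub_distrib, Finset.sum_add_distrib,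
      Finset.sum_range_sub f1, Finset.sum_range_sub f3, Finset.sum_range_sub g]
  have e1 : g n = f1 n := by
    simp only [hg, hf1]
    exact Hsh_congr μ (fun p => p.2)
      (by rintro ⟨b, q⟩ ⟨b', q'⟩ hp
          simp only [Prod.mk.injEq] at hp ⊢
          exact ⟨funext fun j => absurd j.isLt (by omega), hp⟩)
      (fun ω => rfl)
  have e2 : g 0 = f3 0 := by
    simp only [hg, hf3]
    exact Hsh_congr μ (fun p => (p.2.1, p.1))
      (by rintro ⟨b, v, a⟩ ⟨b', v', a'⟩ hp
          simp only [Prod.mk.injEq] at hp ⊢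
          exact ⟨hp.2, hp.1, funext fun j => absurd j.isLt (by omega)⟩)
      (fun ω => rfl)
  have e3 : f3 n = f1 0 := by
    simp only [hf1, hf3]
    exact Hsh_congr μ (fun p => (p.1, fun j => absurd j.isLt (by omega)))
      (by rintro ⟨v, b⟩ ⟨v', b'⟩ hp
          simp only [Prod.mk.injEq] at hp ⊢
          exact ⟨hp.1, funext fun j => absurd j.isLt (by omega)⟩)
      (fun ω => by
        simp only [Prod.mk.injEq, true_and]
        exact funext fun j => absurd j.isLt (by omega))
  rw [e1, e2, e3]
  ring

end Generics2

section Steps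

variable {Ω : Type*} [Fintype Ω] (μ : Ω → ℝ)

lemma step1 {χ β σ ζ υ : Type*} [Fintype χ] [Fintype β] [Fintype σ] [Fintype ζ] [Fintype υ]
    (hμ : IsProb μ) (X : Ω → χ) (Yk : Ω → β) (Bv : Ω → σ) (Zv : Ω → ζ) (U : Ω → υ)
    (f : σ × ζ → υ) (hf : Function.Injective f) (hfU : ∀ ω, f (Bv ω, Zv ω) = U ω) :
    CMI μ X Yk Zv ≤ CMI μ Bv Yk Zv + CMI μ X Yk U := by
  have hchain1 := CMI_chain μ X Bv Yk Zv
  have hchain2 := CMI_chain μ Bv X Yk Zv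
  have hswap : CMI μ (fun ω => (X ω, Bv ω)) Yk Zv
      = CMI μ (fun ω => (Bv ω, X ω)) Yk Zv :=
    CMI_congr μ Prod.swap Prod.swap_injective (fun ω => rfl)
      id Function.injective_id (fun ω => rfl) id Function.injective_id (fun ω => rfl)
  have hnn := CMI_nonneg μ hμ Bv Yk (fun ω => (X ω, Zv ω))
  have hrel : CMI μ X Yk (fun ω => (Bv ω, Zv ω)) = CMI μ X Yk U :=
    CMI_congr μ id Function.injective_id (fun ω => rfl)
      id Function.injective_id (fun ω => rfl) f hf hfU
  linarith

lemma step2 {τ β σ m bt ζ υ : Type*} [Fintype τ] [Fintype β] [Fintype σ] [Fintype m]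
    [Fintype bt] [Fintype ζ] [Fintype υ]
    (hμ : IsProb μ) (Tv : Ω → τ) (Yk : Ω → β) (Av : Ω → σ) (Mv : Ω → m) (Bv : Ω → bt)
    (Z' : Ω → ζ) (U : Ω → υ)
    (g : τ × (m × bt) → ζ) (hg : Function.Injective g)
    (hgZ : ∀ ω, g (Tv ω, (Mv ω, Bv ω)) = Z' ω)
    (f : (σ × τ) × (m × bt) → υ) (hf : Function.Injective f)
    (hfU : ∀ ω, f ((Av ω, Tv ω), (Mv ω, Bv ω)) = U ω) :
    CMI μ Tv Yk (fun ω => (Mv ω, Bv ω)) + CMI μ Av Yk Z' ≤ MI μ U Yk := by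
  have hchain := CMI_chain μ Av Tv Yk (fun ω => (Mv ω, Bv ω))
  have hcongr : CMI μ Av Yk (fun ω => (Tv ω, (Mv ω, Bv ω))) = CMI μ Av Yk Z' :=
    CMI_congr μ id Function.injective_id (fun ω => rfl)
      id Function.injective_id (fun ω => rfl) g hg hgZ
  have hle := CMI_le_MI μ hμ (fun ω => (Av ω, Tv ω)) Yk (fun ω => (Mv ω, Bv ω))
  have hMIc : MI μ (fun ω => ((Av ω, Tv ω), (Mv ω, Bv ω))) Yk = MI μ U Yk :=
    MI_congr μ f hf hfU id Function.injective_id (fun ω => rfl)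
  linarith

end Steps

/-- single-letterization in the more capable converse,
with `Uᵢ = (M1, M3, M4, M5, Y1^{i-1}, Y2_{i+1}^n)`. -/
theorem stmt12 {Ω α₁ α₂ α₃ α₄ α₅ β₁ β₂ : Type*} [Fintype Ω]
    [Fintype α₁] [Fintype α₂] [Fintype α₃] [Fintype α₄] [Fintype α₅]
    [Fintype β₁] [Fintype β₂]
    (μ : Ω → ℝ) (hμ : IsProb μ) (n : ℕ)
    (M1 : Ω → α₁) (M2 : Ω → α₂) (M3 : Ω → α₃) (M4 : Ω → α₄) (M5 : Ω → α₅)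
    (Y1 : Ω → Fin n → β₁) (Y2 : Ω → Fin n → β₂) :
    CMI μ M2 Y1 (fun ω => (M1 ω, M3 ω, M4 ω, M5 ω))
      + CMI μ (fun ω => (M1 ω, M3 ω, M5 ω)) Y2 M4
    ≤ ∑ i : Fin n,
        (CMI μ M2 (fun ω => Y1 ω i)
          (fun ω => (M1 ω, M3 ω, M4 ω, M5 ω,
            (fun j : Fin i.val =>
              Y1 ω ⟨j.val, by have h1 := j.isLt; have h2 := i.isLt; omega⟩),
            (fun j : Fin (n - (i.val + 1)) =>
              Y2 ω ⟨i.val + 1 + j.val, by have h1 := j.isLt; have h2 := i.isLt; omega⟩)))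
        + MI μ
          (fun ω => (M1 ω, M3 ω, M4 ω, M5 ω,
            (fun j : Fin i.val =>
              Y1 ω ⟨j.val, by have h1 := j.isLt; have h2 := i.isLt; omega⟩),
            (fun j : Fin (n - (i.val + 1)) =>
              Y2 ω ⟨i.val + 1 + j.val, by have h1 := j.isLt; have h2 := i.isLt; omega⟩)))
          (fun ω => Y2 ω i)) := by
  classical
  have hexp1 : CMI μ M2 Y1 (fun ω => (M1 ω, M3 ω, M4 ω, M5 ω))
      = (∑ k ∈ Finset.range n, (if h : k < n then CMI μ M2 (fun ω => Y1 ω ⟨k, h⟩) (fun ω => ((M1 ω, M3 ω, M4 ω, M5 ω), preY n Y1 k ω)) else 0)) :=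
    expandA μ M2 (fun ω => (M1 ω, M3 ω, M4 ω, M5 ω)) Y1
  have hexp2 : CMI μ (fun ω => (M1 ω, M3 ω, M5 ω)) Y2 M4
      = (∑ k ∈ Finset.range n, (if h : k < n then CMI μ (fun ω => (M1 ω, M3 ω, M5 ω)) (fun ω => Y2 ω ⟨k, h⟩) (fun ω => (M4 ω, sufY n Y2 (k + 1) ω)) else 0)) :=
    expandB μ (fun ω => (M1 ω, M3 ω, M5 ω)) M4 Y2
  have hCs : (∑ k ∈ Finset.range n, (if h : k < n then CMI μ (fun ω => sufY n Y2 (k + 1) ω) (fun ω => Y1 ω ⟨k, h⟩) (fun ω => ((M1 ω, M3 ω, M4 ω, M5 ω), preY n Y1 k ω)) else 0)) = (∑ k ∈ Finset.range n, (if h : k < n then CMI μ (fun ω => preY n Y1 k ω) (fun ω => Y2 ω ⟨k, h⟩) (fun ω => ((M1 ω, M3 ω, M4 ω, M5 ω), sufY n Y2 (k + 1) ω)) else 0)) :=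
    csiszar μ (fun ω => (M1 ω, M3 ω, M4 ω, M5 ω)) Y1 Y2
  have hstep1 : ∀ k ∈ Finset.range n,
      (if h : k < n then CMI μ M2 (fun ω => Y1 ω ⟨k, h⟩) (fun ω => ((M1 ω, M3 ω, M4 ω, M5 ω), preY n Y1 k ω)) else 0) ≤ (if h : k < n then CMI μ (fun ω => sufY n Y2 (k + 1) ω) (fun ω => Y1 ω ⟨k, h⟩) (fun ω => ((M1 ω, M3 ω, M4 ω, M5 ω), preY n Y1 k ω)) else 0) + (if h : k < n then CMI μ M2 (fun ω => Y1 ω ⟨k, h⟩) (fun ω => (M1 ω, M3 ω, M4 ω, M5 ω,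
          (fun j : Fin k => Y1 ω ⟨j.val, by have h1 := j.isLt; omega⟩),
          (fun j : Fin (n - (k + 1)) => Y2 ω ⟨k + 1 + j.val, by have h1 := j.isLt; omega⟩))) else 0) := by
    intro k hm
    have hk : k < n := Finset.mem_range.1 hm
    rw [dif_pos hk, dif_pos hk, dif_pos hk]
    refine step1 μ hμ M2 (fun ω => Y1 ω ⟨k, hk⟩) (fun ω => sufY n Y2 (k + 1) ω)
      (fun ω => ((M1 ω, M3 ω, M4 ω, M5 ω), preY n Y1 k ω)) _
      (fun p => (p.2.1.1, p.2.1.2.1, p.2.1.2.2.1, p.2.1.2.2.2,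
        (fun j : Fin k => p.2.2 ⟨j.val, by have := j.isLt; omega⟩), p.1)) ?_ (fun ω => rfl)
    rintro ⟨b, ⟨⟨m1, m3, m4, m5⟩, a⟩⟩ ⟨b', ⟨⟨m1', m3', m4', m5'⟩, a'⟩⟩ hp
    simp only [Prod.mk.injEq] at hp ⊢
    obtain ⟨h1, h2, h3, h4, h5, h6⟩ := hp
    refine ⟨h6, ⟨h1, h2, h3, h4⟩, ?_⟩
    funext j
    simpa using congrFun h5 ⟨j.val, by have := j.isLt; omega⟩
  have hstep2 : ∀ k ∈ Finset.range n,
      (if h : k < n then CMI μ (fun ω => (M1 ω, M3 ω, M5 ω)) (fun ω => Y2 ω ⟨k, h⟩) (fun ω => (M4 ω, sufY n Y2 (k + 1) ω)) else 0) + (if h : k < n then CMI μ (fun ω => preY n Y1 k ω) (fun ω => Y2 ω ⟨k, h⟩) (fun ω => ((M1 ω, M3 ω, M4 ω, M5 ω), sufY n Y2 (k + 1) ω)) else 0) ≤ (if h : k < n then MI μ (fun ω => (M1 ω, M3 ω, M4 ω, M5 ω,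
          (fun j : Fin k => Y1 ω ⟨j.val, by have h1 := j.isLt; omega⟩),
          (fun j : Fin (n - (k + 1)) => Y2 ω ⟨k + 1 + j.val, by have h1 := j.isLt; omega⟩))) (fun ω => Y2 ω ⟨k, h⟩) else 0) := by
    intro k hm
    have hk : k < n := Finset.mem_range.1 hm
    rw [dif_pos hk, dif_pos hk, dif_pos hk]
    refine step2 μ hμ (fun ω => (M1 ω, M3 ω, M5 ω)) (fun ω => Y2 ω ⟨k, hk⟩)
      (fun ω => preY n Y1 k ω) M4 (fun ω => sufY n Y2 (k + 1) ω) _ _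
      (fun p => ((p.1.1, p.1.2.1, p.2.1, p.1.2.2), p.2.2)) ?_ (fun ω => rfl)
      (fun p => (p.1.2.1, p.1.2.2.1, p.2.1, p.1.2.2.2,
        (fun j : Fin k => p.1.1 ⟨j.val, by have := j.isLt; omega⟩), p.2.2)) ?_ (fun ω => rfl)
    · rintro ⟨⟨m1, m3, m5⟩, m4, b⟩ ⟨⟨m1', m3', m5'⟩, m4', b'⟩ hp
      simp only [Prod.mk.injEq] at hp ⊢
      tauto
    · rintro ⟨⟨a, m1, m3, m5⟩, m4, b⟩ ⟨⟨a', m1', m3', m5'⟩, m4', b'⟩ hp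
      simp only [Prod.mk.injEq] at hp ⊢
      obtain ⟨h1, h2, h3, h4, h5, h6⟩ := hp
      refine ⟨⟨?_, h1, h2, h4⟩, h3, h6⟩
      funext j
      simpa using congrFun h5 ⟨j.val, by have := j.isLt; omega⟩
  have hfin : (∑ k ∈ Finset.range n, (if h : k < n then CMI μ M2 (fun ω => Y1 ω ⟨k, h⟩) (fun ω => (M1 ω, M3 ω, M4 ω, M5 ω,
          (fun j : Fin k => Y1 ω ⟨j.val, by have h1 := j.isLt; omega⟩),
          (fun j : Fin (n - (k + 1)) => Y2 ω ⟨k + 1 + j.val, by have h1 := j.isLt; omega⟩))) + MI μ (fun ω => (M1 ω, M3 ω, M4 ω, M5 ω,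
          (fun j : Fin k => Y1 ω ⟨j.val, by have h1 := j.isLt; omega⟩),
          (fun j : Fin (n - (k + 1)) => Y2 ω ⟨k + 1 + j.val, by have h1 := j.isLt; omega⟩))) (fun ω => Y2 ω ⟨k, h⟩) else 0))
      = ∑ i : Fin n,
        (CMI μ M2 (fun ω => Y1 ω i)
          (fun ω => (M1 ω, M3 ω, M4 ω, M5 ω,
            (fun j : Fin i.val =>
              Y1 ω ⟨j.val, by have h1 := j.isLt; have h2 := i.isLt; omega⟩),
            (fun j : Fin (n - (i.val + 1)) =>
              Y2 ω ⟨i.val + 1 + j.val, by have h1 := j.isLt; have h2 := i.isLt; omega⟩)))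
        + MI μ
          (fun ω => (M1 ω, M3 ω, M4 ω, M5 ω,
            (fun j : Fin i.val =>
              Y1 ω ⟨j.val, by have h1 := j.isLt; have h2 := i.isLt; omega⟩),
            (fun j : Fin (n - (i.val + 1)) =>
              Y2 ω ⟨i.val + 1 + j.val, by have h1 := j.isLt; have h2 := i.isLt; omega⟩)))
          (fun ω => Y2 ω i)) := by
    rw [← Fin.sum_univ_eq_sum_range]
    exact Finset.sum_congr rfl fun i _ => by rw [dif_pos i.isLt]
  calc CMI μ M2 Y1 (fun ω => (M1 ω, M3 ω, M4 ω, M5 ω))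
        + CMI μ (fun ω => (M1 ω, M3 ω, M5 ω)) Y2 M4
      = (∑ k ∈ Finset.range n, (if h : k < n then CMI μ M2 (fun ω => Y1 ω ⟨k, h⟩) (fun ω => ((M1 ω, M3 ω, M4 ω, M5 ω), preY n Y1 k ω)) else 0)) + (∑ k ∈ Finset.range n, (if h : k < n then CMI μ (fun ω => (M1 ω, M3 ω, M5 ω)) (fun ω => Y2 ω ⟨k, h⟩) (fun ω => (M4 ω, sufY n Y2 (k + 1) ω)) else 0)) := by rw [hexp1, hexp2]
    _ ≤ ((∑ k ∈ Finset.range n, (if h : k < n then CMI μ (fun ω => sufY n Y2 (k + 1) ω) (fun ω => Y1 ω ⟨k, h⟩) (fun ω => ((M1 ω, M3 ω, M4 ω, M5 ω), preY n Y1 k ω)) else 0)) + (∑ k ∈ Finset.range n, (if h : k < n then CMI μ M2 (fun ω => Y1 ω ⟨k, h⟩) (fun ω => (M1 ω, M3 ω, M4 ω, M5 ω,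
          (fun j : Fin k => Y1 ω ⟨j.val, by have h1 := j.isLt; omega⟩),
          (fun j : Fin (n - (k + 1)) => Y2 ω ⟨k + 1 + j.val, by have h1 := j.isLt; omega⟩))) else 0))) + (∑ k ∈ Finset.range n, (if h : k < n then CMI μ (fun ω => (M1 ω, M3 ω, M5 ω)) (fun ω => Y2 ω ⟨k, h⟩) (fun ω => (M4 ω, sufY n Y2 (k + 1) ω)) else 0)) := by
        have h1 : (∑ k ∈ Finset.range n, (if h : k < n then CMI μ M2 (fun ω => Y1 ω ⟨k, h⟩) (fun ω => ((M1 ω, M3 ω, M4 ω, M5 ω), preY n Y1 k ω)) else 0)) ≤ (∑ k ∈ Finset.range n, (if h : k < n then CMI μ (fun ω => sufY n Y2 (k + 1) ω) (fun ω => Y1 ω ⟨k, h⟩) (fun ω => ((M1 ω, M3 ω, M4 ω, M5 ω), preY n Y1 k ω)) else 0)) + (∑ k ∈ Finset.range n, (if h : k < n then CMI μ M2 (fun ω => Y1 ω ⟨k, h⟩) (fun ω => (M1 ω, M3 ω, M4 ω, M5 ω,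
          (fun j : Fin k => Y1 ω ⟨j.val, by have h1 := j.isLt; omega⟩),
          (fun j : Fin (n - (k + 1)) => Y2 ω ⟨k + 1 + j.val, by have h1 := j.isLt; omega⟩))) else 0)) := by
          rw [← Finset.sum_add_distrib]
          exact Finset.sum_le_sum hstep1
        linarith
    _ = (∑ k ∈ Finset.range n, (if h : k < n then CMI μ M2 (fun ω => Y1 ω ⟨k, h⟩) (fun ω => (M1 ω, M3 ω, M4 ω, M5 ω,
          (fun j : Fin k => Y1 ω ⟨j.val, by have h1 := j.isLt; omega⟩),
          (fun j : Fin (n - (k + 1)) => Y2 ω ⟨k + 1 + j.val, by have h1 := j.isLt; omega⟩))) else 0)) + ((∑ k ∈ Finset.range n, (if h : k < n then CMI μ (fun ω => (M1 ω, M3 ω, M5 ω)) (fun ω => Y2 ω ⟨k, h⟩) (fun ω => (M4 ω, sufY n Y2 (k + 1) ω)) else 0)) + (∑ k ∈ Finset.range n, (if h : k < n then CMI μ (fun ω => preY n Y1 k ω) (fun ω => Y2 ω ⟨k, h⟩) (fun ω => ((M1 ω, M3 ω, M4 ω, M5 ω), sufY n Y2 (k + 1) ω)) else 0))) := by rw [hCs];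 ring
    _ ≤ (∑ k ∈ Finset.range n, (if h : k < n then CMI μ M2 (fun ω => Y1 ω ⟨k, h⟩) (fun ω => (M1 ω, M3 ω, M4 ω, M5 ω,
          (fun j : Fin k => Y1 ω ⟨j.val, by have h1 := j.isLt; omega⟩),
          (fun j : Fin (n - (k + 1)) => Y2 ω ⟨k + 1 + j.val, by have h1 := j.isLt; omega⟩))) else 0)) + (∑ k ∈ Finset.range n, (if h : k < n then MI μ (fun ω => (M1 ω, M3 ω, M4 ω, M5 ω,
          (fun j : Fin k => Y1 ω ⟨j.val, by have h1 := j.isLt; omega⟩),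
          (fun j : Fin (n - (k + 1)) => Y2 ω ⟨k + 1 + j.val, by have h1 := j.isLt; omega⟩))) (fun ω => Y2 ω ⟨k, h⟩) else 0)) := by
        have h2 : (∑ k ∈ Finset.range n, (if h : k < n then CMI μ (fun ω => (M1 ω, M3 ω, M5 ω)) (fun ω => Y2 ω ⟨k, h⟩) (fun ω => (M4 ω, sufY n Y2 (k + 1) ω)) else 0)) + (∑ k ∈ Finset.range n, (if h : k < n then CMI μ (fun ω => preY n Y1 k ω) (fun ω => Y2 ω ⟨k, h⟩) (fun ω => ((M1 ω, M3 ω, M4 ω, M5 ω), sufY n Y2 (k + 1) ω)) else 0)) ≤ (∑ k ∈ Finset.range n, (if h : k < n then MI μ (fun ω => (M1 ω, M3 ω, M4 ω, M5 ω,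
          (fun j : Fin k => Y1 ω ⟨j.val, by have h1 := j.isLt; omega⟩),
          (fun j : Fin (n - (k + 1)) => Y2 ω ⟨k + 1 + j.val, by have h1 := j.isLt; omega⟩))) (fun ω => Y2 ω ⟨k, h⟩) else 0)) := by
          rw [← Finset.sum_add_distrib]
          exact Finset.sum_le_sum hstep2
        linarith
    _ = (∑ k ∈ Finset.range n, (if h : k < n then CMI μ M2 (fun ω => Y1 ω ⟨k, h⟩) (fun ω => (M1 ω, M3 ω, M4 ω, M5 ω,
          (fun j : Fin k => Y1 ω ⟨j.val, by have h1 := j.isLt; omega⟩),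
          (fun j : Fin (n - (k + 1)) => Y2 ω ⟨k + 1 + j.val, by have h1 := j.isLt; omega⟩))) + MI μ (fun ω => (M1 ω, M3 ω, M4 ω, M5 ω,
          (fun j : Fin k => Y1 ω ⟨j.val, by have h1 := j.isLt; omega⟩),
          (fun j : Fin (n - (k + 1)) => Y2 ω ⟨k + 1 + j.val, by have h1 := j.isLt; omega⟩))) (fun ω => Y2 ω ⟨k, h⟩) else 0)) := by
        rw [← Finset.sum_add_distrib]
        refine Finset.sum_congr rfl fun k hm => ?_
        have hk : k < n := Finset.mem_range.1 hm
        rw [dif_pos hk, dif_pos hk, dif_pos hk]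
    _ = ∑ i : Fin n,
        (CMI μ M2 (fun ω => Y1 ω i)
          (fun ω => (M1 ω, M3 ω, M4 ω, M5 ω,
            (fun j : Fin i.val =>
              Y1 ω ⟨j.val, by have h1 := j.isLt; have h2 := i.isLt; omega⟩),
            (fun j : Fin (n - (i.val + 1)) =>
              Y2 ω ⟨i.val + 1 + j.val, by have h1 := j.isLt; have h2 := i.isLt; omega⟩)))
        + MI μ
          (fun ω => (M1 ω, M3 ω, M4 ω, M5 ω,
            (fun j : Fin i.val =>
              Y1 ω ⟨j.val, by have h1 := j.isLt; have h2 := i.isLt; omega⟩),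
            (fun j : Fin (n - (i.val + 1)) =>
              Y2 ω ⟨i.val + 1 + j.val, by have h1 := j.isLt; have h2 := i.isLt; omega⟩)))
          (fun ω => Y2 ω i)) := hfin
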